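/- For all n ≥ 0: the number of Jacobi permutations of [2n] avoiding 213 equals (1/(2n+1))·C(3n, n), and this also equals the number of Jacobi permutations of [2n] avoiding 312; similarly, the number of Jacobi permutations of [2n+1] avoiding 213 equals (1/(2n+1))·C(3n+1, n+1), and this also equals the number of Jacobi permutations of [2n+1] avoiding 312. -/

import Mathlib

/-- The length of `ρ_π(π_k)`: the maximal consecutive subword of `π` immediately to the
right of position `k`, all of whose letters are larger than `π_k`.  Letters of a
permutation of `[n] = {1,…,n}` are modelled by `(π i : ℕ) + 1` for `π : Equiv.Perm (Fin n)`. -/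
noncomputable def rhoLen {n : ℕ} (π : Equiv.Perm (Fin n)) (k : Fin n) : ℕ :=
  Nat.card {j : Fin n // k < j ∧ ∀ i : Fin n, k < i → i ≤ j → π k < π i}

/-- A permutation is Jacobi if `ρ_π(π_k)` has even length for every position `k`. -/
def IsJacobi {n : ℕ} (π : Equiv.Perm (Fin n)) : Prop :=
  ∀ k : Fin n, Even (rhoLen π k)

/-- `π` avoids the pattern `123`. -/
def Avoids123 {n : ℕ} (π : Equiv.Perm (Fin n)) : Prop :=
  ¬ ∃ i j k : Fin n, i < j ∧ j < k ∧ π i < π j ∧ π j < π k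

/-- `π` avoids the pattern `132`. -/
def Avoids132 {n : ℕ} (π : Equiv.Perm (Fin n)) : Prop :=
  ¬ ∃ i j k : Fin n, i < j ∧ j < k ∧ π i < π k ∧ π k < π j

/-- `π` avoids the pattern `213`. -/
def Avoids213 {n : ℕ} (π : Equiv.Perm (Fin n)) : Prop :=
  ¬ ∃ i j k : Fin n, i < j ∧ j < k ∧ π j < π i ∧ π i < π k

/-- `π` avoids the pattern `231`. -/
def Avoids231 {n : ℕ} (π : Equiv.Perm (Fin n)) : Prop :=
  ¬ ∃ i j k : Fin n, i < j ∧ j < k ∧ π k < π i ∧ π i < π j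

/-- `π` avoids the pattern `312`. -/
def Avoids312 {n : ℕ} (π : Equiv.Perm (Fin n)) : Prop :=
  ¬ ∃ i j k : Fin n, i < j ∧ j < k ∧ π j < π k ∧ π k < π i

/-- `π` avoids the pattern `321`. -/
def Avoids321 {n : ℕ} (π : Equiv.Perm (Fin n)) : Prop :=
  ¬ ∃ i j k : Fin n, i < j ∧ j < k ∧ π k < π j ∧ π j < π i


open Finset Equiv

set_option linter.unusedSectionVars false
set_option maxHeartbeats 1000000

open Finset

noncomputable def fcA (n p : ℕ) : ℚ :=
  if p = 0 then (if n = 0 then 1 else 0)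
  else (p : ℚ) / (3 * n + p) * ((3 * n + p).choose n : ℕ)

lemma fcA_zero_right (n : ℕ) : fcA n 0 = if n = 0 then 1 else 0 := by simp [fcA]

lemma fcA_pos (n p : ℕ) (hp : p ≠ 0) :
    fcA n p = (p : ℚ) / (3 * n + p) * ((3 * n + p).choose n : ℕ) := by simp [fcA, hp]

lemma fcA_zero_left (p : ℕ) : fcA 0 p = 1 := by
  rcases Nat.eq_zero_or_pos p with h | h
  · simp [h, fcA]
  · rw [fcA_pos _ _ h.ne']
    have : (p:ℚ) ≠ 0 := by positivity
    simp [this]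

lemma choose_rel (n m : ℕ) (h : n ≤ m) :
    ((m).choose (n+1) : ℚ) * (n+1) = ((m).choose n : ℚ) * ((m : ℚ) - n) := by
  have hr := Nat.choose_succ_right_eq m n
  have : ((m.choose (n+1) * (n+1) : ℕ) : ℚ) = ((m.choose n * (m - n) : ℕ) : ℚ) := by
    exact_mod_cast congrArg (Nat.cast : ℕ → ℚ) hr
  push_cast [Nat.cast_sub h] at this
  exact_mod_cast this

/-- Pascal-type recurrence for fcA. -/
lemma fcA_pascal (n p : ℕ) : fcA (n+1) (p+1) = fcA (n+1) p + fcA n (p+3) := by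
  rcases p with _ | p
  · -- A (n+1) 1 = A n 3
    show fcA (n+1) 1 = fcA (n+1) 0 + fcA n 3
    rw [fcA_pos _ _ one_ne_zero, fcA_zero_right, if_neg (Nat.succ_ne_zero n),
      fcA_pos _ _ (by norm_num)]
    have h := Nat.add_one_mul_choose_eq (3*n+3) n
    have h' : (((3*n+3)+1) * ((3*n+3).choose n) : ℚ) = ((3*n+4).choose (n+1) : ℕ) * (n+1) := by
      exact_mod_cast congrArg (Nat.cast : ℕ → ℚ) h
    rw [show 3*(n+1)+1 = 3*n+4 from by ring, show 3*n+3 = 3*n+3 from rfl]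
    push_cast at h' ⊢
    have e2 : 3*(n:ℚ)+3 ≠ 0 := by positivity
    have e3 : 3*(n:ℚ)+4 ≠ 0 := by positivity
    have e5 : (n:ℚ)+1 ≠ 0 := by positivity
    field_simp
    linear_combination -h'
  · rw [fcA_pos _ _ (by omega), fcA_pos _ _ (by omega), fcA_pos _ _ (by omega),
      show 3*(n+1)+(p+1+1) = (3*n+p+4)+1 from by ring,
      show 3*(n+1)+(p+1) = 3*n+p+4 from by ring,
      show 3*n+(p+1+3) = 3*n+p+4 from by ring,
      Nat.choose_succ_succ' (3*n+p+4) n]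
    have hrel := choose_rel n (3*n+p+4) (by omega)
    have hc : ((3*n+p+4 : ℕ) : ℚ) - n = 2*n+p+4 := by push_cast; ring
    rw [hc] at hrel
    have d1 : (3*(n:ℚ)+p+5) ≠ 0 := by positivity
    have d2 : (3*(n:ℚ)+p+4) ≠ 0 := by positivity
    have e5 : (n:ℚ)+1 ≠ 0 := by positivity
    push_cast at hrel ⊢
    field_simp
    linear_combination (9*(n:ℚ)+3*(p:ℚ)+12)*hrel

open Finset


lemma fcA_conv (n : ℕ) : ∀ p r : ℕ, ∑ i ∈ range (n+1), fcA i p * fcA (n-i) r = fcA n (p+r) := by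
  induction n using Nat.strong_induction_on with
  | _ n ih =>
    rcases n with _ | m
    · intro p r; simp [fcA_zero_left]
    · intro p r
      induction p with
      | zero =>
        rw [Finset.sum_eq_single 0]
        · simp [fcA_zero_left, fcA_zero_right]
        · intro i _ hi
          rw [fcA_zero_right, if_neg hi]; ring
        · intro h; simp at h
      | succ p ihp =>
        have hpeel := Finset.sum_range_succ' (fun i => fcA i (p+1) * fcA (m+1-i) r) (m+1)
        simp only [Nat.succ_sub_succ, Nat.sub_zero] at hpeel
        rw [hpeel]
        have hsplit : ∀ i, fcA (i+1) (p+1) * fcA (m-i) r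
            = fcA (i+1) p * fcA (m-i) r + fcA i (p+3) * fcA (m-i) r := by
          intro i; rw [fcA_pascal]; ring
        rw [Finset.sum_congr rfl (fun i _ => hsplit i), Finset.sum_add_distrib]
        have h2 : ∑ i ∈ range (m+1), fcA i (p+3) * fcA (m-i) r = fcA m (p+r+3) := by
          rw [ih m (by omega) (p+3) r]; ring_nf
        have h1 := Finset.sum_range_succ' (fun i => fcA i p * fcA (m+1-i) r) (m+1)
        simp only [Nat.succ_sub_succ, Nat.sub_zero] at h1
        rw [ihp, fcA_zero_left] at h1
        rw [h2, fcA_zero_left, show p+1+r = (p+r)+1 from by omega, fcA_pascal]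
        linarith [h1]

open Finset




lemma fcA_one (n : ℕ) : fcA n 1 = (1 / (2*(n:ℚ)+1)) * ((3*n).choose n : ℕ) := by
  rw [fcA_pos _ _ one_ne_zero]
  have H1 : ((3*n+1 : ℕ) : ℚ) * ((3*n).choose n : ℕ) = ((3*n+1).choose (n+1) : ℕ) * ((n:ℚ)+1) := by
    exact_mod_cast congrArg (Nat.cast : ℕ → ℚ) (Nat.add_one_mul_choose_eq (3*n) n)
  have H3 := choose_rel n (3*n+1) (by omega)
  have hc : ((3*n+1 : ℕ) : ℚ) - n = 2*n+1 := by push_cast; ring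
  rw [hc] at H3
  push_cast at H1 H3 ⊢
  have d1 : 3*(n:ℚ)+1 ≠ 0 := by positivity
  have d2 : 2*(n:ℚ)+1 ≠ 0 := by positivity
  field_simp
  linear_combination -H1 - H3

lemma fcA_two (n : ℕ) : fcA n 2 = (1 / (2*(n:ℚ)+1)) * ((3*n+1).choose (n+1) : ℕ) := by
  rw [fcA_pos _ _ two_ne_zero]
  have H3 := choose_rel n (3*n+1) (by omega)
  have hc : ((3*n+1 : ℕ) : ℚ) - n = 2*n+1 := by push_cast; ring
  rw [hc] at H3
  have H4 : ((3*n+2 : ℕ) : ℚ) * ((3*n+1).choose n : ℕ) = ((3*n+2).choose (n+1) : ℕ) * ((n:ℚ)+1) := by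
    exact_mod_cast congrArg (Nat.cast : ℕ → ℚ) (Nat.add_one_mul_choose_eq (3*n+1) n)
  have H5 := choose_rel n (3*n+2) (by omega)
  have hc2 : ((3*n+2 : ℕ) : ℚ) - n = 2*n+2 := by push_cast; ring
  rw [hc2] at H5
  push_cast at H3 H4 H5 ⊢
  have d1 : 3*(n:ℚ)+2 ≠ 0 := by positivity
  have d2 : 2*(n:ℚ)+1 ≠ 0 := by positivity
  have d3 : (n:ℚ)+1 ≠ 0 := by positivity
  have key : (2*(2*(n:ℚ)+1)) * ((3*n+2).choose n : ℕ) * ((n:ℚ)+1)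
      = ((3*(n:ℚ)+2) * ((3*n+1).choose (n+1) : ℕ)) * ((n:ℚ)+1) := by
    linear_combination (-(2*(n:ℚ)+1))*H5 + (-(2*(n:ℚ)+1))*H4 + (-(3*(n:ℚ)+2))*H3
  have key2 := mul_right_cancel₀ d3 key
  field_simp
  linear_combination key2


lemma rhoLen_eq {n : ℕ} (π : Equiv.Perm (Fin n)) (k : Fin n) :
    rhoLen π k = Nat.card {j : Fin n // (k:ℕ) < (j:ℕ) ∧
      ∀ i : Fin n, (k:ℕ) < (i:ℕ) → (i:ℕ) ≤ (j:ℕ) → (π k : ℕ) < (π i : ℕ)} := rfl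
open Equiv Finset
def posA {p q : ℕ} (i' : Fin p) : Fin (p+1+q) := ⟨(i':ℕ), by have := i'.isLt; omega⟩
def posB {p q : ℕ} (j' : Fin q) : Fin (p+1+q) := ⟨p+1+(j':ℕ), by have := j'.isLt; omega⟩


section Bounds
variable {p q : ℕ} (π : Equiv.Perm (Fin (p+1+q))) (h0 : (π ⟨p, by omega⟩ : ℕ) = 0)

include h0 in
lemma pi_ne_zero (i : Fin (p+1+q)) (hi : (i:ℕ) ≠ p) : 0 < (π i : ℕ) := by
  rcases Nat.eq_zero_or_pos (π i : ℕ) with h | h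
  swap
  · exact h
  · exfalso
    have : π i = π ⟨p, by omega⟩ := Fin.ext (by omega)
    have := π.injective this
    apply hi
    rw [this]

include h0 in
lemma sep312 (hAv : Avoids312 π) (i k : Fin (p+1+q)) (hi : (i:ℕ) < p) (hk : p < (k:ℕ)) :
    (π i : ℕ) < (π k : ℕ) := by
  by_contra hle
  push_neg at hle
  have hne : (π k : ℕ) ≠ (π i : ℕ) := fun h => by
    have := π.injective (Fin.ext h)
    omega
  have hkpos : 0 < (π k : ℕ) := pi_ne_zero π h0 k (by omega)
  exact hAv ⟨i, ⟨p, by omega⟩, k, show (i:ℕ) < p from hi, show p < (k:ℕ) from hk,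
    show (π ⟨p, by omega⟩ : ℕ) < (π k : ℕ) by omega,
    show (π k : ℕ) < (π i : ℕ) by omega⟩

include h0 in
lemma sep213 (hAv : Avoids213 π) (i k : Fin (p+1+q)) (hi : (i:ℕ) < p) (hk : p < (k:ℕ)) :
    (π k : ℕ) < (π i : ℕ) := by
  by_contra hle
  push_neg at hle
  have hne : (π i : ℕ) ≠ (π k : ℕ) := fun h => by
    have := π.injective (Fin.ext h)
    omega
  have hipos : 0 < (π i : ℕ) := pi_ne_zero π h0 i (by omega)
  exact hAv ⟨i, ⟨p, by omega⟩, k, show (i:ℕ) < p from hi, show p < (k:ℕ) from hk,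
    show (π ⟨p, by omega⟩ : ℕ) < (π i : ℕ) by omega,
    show (π i : ℕ) < (π k : ℕ) by omega⟩

/-- If `S.card` values of `π` are all above `π v`, then `π v + S.card ≤ p + q`. -/
lemma card_above (v : Fin (p+1+q)) (S : Finset (Fin (p+1+q)))
    (hS : ∀ x ∈ S, (π v : ℕ) < (π x : ℕ)) : (π v : ℕ) + S.card ≤ p + q := by
  have hsub : S.image π ⊆ Finset.Ioi (π v) := by
    intro y hy
    rw [Finset.mem_image] at hy
    obtain ⟨x, hx, rfl⟩ := hy
    rw [Finset.mem_Ioi]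
    exact hS x hx
  have h1 := Finset.card_le_card hsub
  rw [Finset.card_image_of_injective _ π.injective, Fin.card_Ioi] at h1
  omega

lemma card_below (v : Fin (p+1+q)) (S : Finset (Fin (p+1+q)))
    (hS : ∀ x ∈ S, (π x : ℕ) < (π v : ℕ)) : S.card ≤ (π v : ℕ) := by
  have hsub : S.image π ⊆ Finset.Iio (π v) := by
    intro y hy
    rw [Finset.mem_image] at hy
    obtain ⟨x, hx, rfl⟩ := hy
    rw [Finset.mem_Iio]
    exact hS x hx
  have h1 := Finset.card_le_card hsub
  rw [Finset.card_image_of_injective _ π.injective, Fin.card_Iio] at h1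
  exact h1

lemma cardBafter : (Finset.univ.filter (fun x : Fin (p+1+q) => p < (x:ℕ))).card = q := by
  have e : (Finset.univ.filter (fun x : Fin (p+1+q) => p < (x:ℕ)))
      = Finset.Ioi (⟨p, by omega⟩ : Fin (p+1+q)) :=
    Finset.ext fun x => by
      rw [Finset.mem_filter, Finset.mem_Ioi]
      exact ⟨fun h => h.2, fun h => ⟨Finset.mem_univ x, h⟩⟩
  rw [e, Fin.card_Ioi]
  show p+1+q-1-p = q
  omega

lemma cardBbefore : (Finset.univ.filter (fun x : Fin (p+1+q) => (x:ℕ) ≤ p)).card = p+1 := by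
  have h2 : (Finset.univ.filter (fun x : Fin (p+1+q) => (x:ℕ) ≤ p))
      = (Finset.univ.filter (fun x : Fin (p+1+q) => p < (x:ℕ)))ᶜ := by
    ext x
    rw [Finset.mem_compl, Finset.mem_filter, Finset.mem_filter]
    constructor
    · rintro ⟨-, h⟩ ⟨-, h2⟩; omega
    · intro h
      refine ⟨Finset.mem_univ x, ?_⟩
      by_contra h3
      exact h ⟨Finset.mem_univ x, by omega⟩
  rw [h2, Finset.card_compl, cardBafter]
  simp

lemma cardBfrom : (Finset.univ.filter (fun x : Fin (p+1+q) => p ≤ (x:ℕ))).card = q+1 := by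
  have e : (Finset.univ.filter (fun x : Fin (p+1+q) => p ≤ (x:ℕ)))
      = Finset.Ici (⟨p, by omega⟩ : Fin (p+1+q)) :=
    Finset.ext fun x => by
      rw [Finset.mem_filter, Finset.mem_Ici]
      exact ⟨fun h => h.2, fun h => ⟨Finset.mem_univ x, h⟩⟩
  rw [e, Fin.card_Ici]
  show p+1+q-p = q+1
  omega

lemma cardAset : (Finset.univ.filter (fun x : Fin (p+1+q) => (x:ℕ) < p)).card = p := by
  have e : (Finset.univ.filter (fun x : Fin (p+1+q) => (x:ℕ) < p))
      = Finset.Iio (⟨p, by omega⟩ : Fin (p+1+q)) :=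
    Finset.ext fun x => by
      rw [Finset.mem_filter, Finset.mem_Iio]
      exact ⟨fun h => h.2, fun h => ⟨Finset.mem_univ x, h⟩⟩
  rw [e, Fin.card_Iio]

include h0 in
lemma bounds312 (hAv : Avoids312 π) :
    (∀ i : Fin (p+1+q), (i:ℕ) < p → 1 ≤ (π i:ℕ) ∧ (π i:ℕ) < 1 + p) ∧
    (∀ i : Fin (p+1+q), p < (i:ℕ) → p+1 ≤ (π i:ℕ) ∧ (π i:ℕ) < (p+1) + q) := by
  constructor
  · intro i hi
    refine ⟨pi_ne_zero π h0 i (by omega), ?_⟩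
    have hc := card_above π i (Finset.univ.filter (fun x : Fin (p+1+q) => p < (x:ℕ)))
      (fun x hx => sep312 π h0 hAv i x hi (by rw [Finset.mem_filter] at hx; exact hx.2))
    rw [cardBafter] at hc
    omega
  · intro k hk
    refine ⟨?_, by have := (π k).isLt; omega⟩
    have hc := card_below π k (Finset.univ.filter (fun x : Fin (p+1+q) => (x:ℕ) ≤ p)) ?_
    · rw [cardBbefore] at hc
      omega
    · intro x hx
      rw [Finset.mem_filter] at hx
      rcases Nat.lt_or_ge ((x:ℕ)) p with h | h
      · exact sep312 π h0 hAv x k h hk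
      · have hxp : (x:ℕ) = p := by have := hx.2; omega
        have : (π x : ℕ) = 0 := by
          have e : x = ⟨p, by omega⟩ := Fin.ext hxp
          rw [e]; exact h0
        have := pi_ne_zero π h0 k (by omega)
        omega

include h0 in
lemma bounds213 (hAv : Avoids213 π) :
    (∀ i : Fin (p+1+q), (i:ℕ) < p → q+1 ≤ (π i:ℕ) ∧ (π i:ℕ) < (q+1) + p) ∧
    (∀ i : Fin (p+1+q), p < (i:ℕ) → 1 ≤ (π i:ℕ) ∧ (π i:ℕ) < 1 + q) := by
  constructor
  · intro i hi
    refine ⟨?_, by have := (π i).isLt; omega⟩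
    have hc := card_below π i (Finset.univ.filter (fun x : Fin (p+1+q) => p ≤ (x:ℕ))) ?_
    · rw [cardBfrom] at hc
      omega
    · intro x hx
      rw [Finset.mem_filter] at hx
      rcases Nat.lt_or_ge p ((x:ℕ)) with h | h
      · exact sep213 π h0 hAv i x hi h
      · have hxp : (x:ℕ) = p := by have := hx.2; omega
        have hx0 : (π x : ℕ) = 0 := by
          have e : x = ⟨p, by omega⟩ := Fin.ext hxp
          rw [e]; exact h0
        have := pi_ne_zero π h0 i (by omega)
        omega
  · intro k hk
    refine ⟨pi_ne_zero π h0 k (by omega), ?_⟩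
    have hc := card_above π k (Finset.univ.filter (fun x : Fin (p+1+q) => (x:ℕ) < p))
      (fun x hx => sep213 π h0 hAv x k (by rw [Finset.mem_filter] at hx; exact hx.2) hk)
    rw [cardAset] at hc
    omega

include h0 in
lemma reconstruct {a b : ℕ}
    (hAbd : ∀ i : Fin (p+1+q), (i:ℕ) < p → a ≤ (π i:ℕ) ∧ (π i:ℕ) < a + p)
    (hBbd : ∀ i : Fin (p+1+q), p < (i:ℕ) → b ≤ (π i:ℕ) ∧ (π i:ℕ) < b + q) :
    ∃ (σ : Equiv.Perm (Fin p)) (τ : Equiv.Perm (Fin q)),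
      (∀ i : Fin (p+1+q), (h : (i:ℕ) < p) → (π i : ℕ) = σ ⟨(i:ℕ), h⟩ + a) ∧
      (∀ i : Fin (p+1+q), (i:ℕ) = p → (π i : ℕ) = 0) ∧
      (∀ i : Fin (p+1+q), (h : p < (i:ℕ)) →
        (π i : ℕ) = τ ⟨(i:ℕ) - (p+1), by have := i.isLt; omega⟩ + b) := by
  have hM : ∀ i : Fin (p+1+q), (i:ℕ) = p → (π i : ℕ) = 0 := by
    intro i hi
    have e : i = ⟨p, by omega⟩ := Fin.ext hi
    rw [e]; exact h0
  have hAbd' : ∀ i' : Fin p, a ≤ (π (posA i') : ℕ) ∧ (π (posA i') : ℕ) < a + p :=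
    fun i' => hAbd (posA i') i'.isLt
  have hBbd' : ∀ j' : Fin q, b ≤ (π (posB j') : ℕ) ∧ (π (posB j') : ℕ) < b + q :=
    fun j' => hBbd (posB j') (show p < p+1+(j':ℕ) by omega)
  let σ0 : Fin p → Fin p := fun i' => ⟨(π (posA i') : ℕ) - a, by have := hAbd' i'; omega⟩
  have hσ0 : ∀ i', (σ0 i' : ℕ) = (π (posA i') : ℕ) - a := fun _ => rfl
  have hσinj : Function.Injective σ0 := by
    intro x y hxy
    have hv : (σ0 x : ℕ) = (σ0 y : ℕ) := congrArg Fin.val hxy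
    rw [hσ0, hσ0] at hv
    have hx := hAbd' x
    have hy := hAbd' y
    have e : π (posA x) = π (posA y) := Fin.ext (by omega)
    have e2 := congrArg Fin.val (π.injective e)
    exact Fin.ext (by simpa [posA] using e2)
  let τ0 : Fin q → Fin q := fun j' => ⟨(π (posB j') : ℕ) - b, by have := hBbd' j'; omega⟩
  have hτ0 : ∀ j', (τ0 j' : ℕ) = (π (posB j') : ℕ) - b := fun _ => rfl
  have hτinj : Function.Injective τ0 := by
    intro x y hxy
    have hv : (τ0 x : ℕ) = (τ0 y : ℕ) := congrArg Fin.val hxy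
    rw [hτ0, hτ0] at hv
    have hx := hBbd' x
    have hy := hBbd' y
    have e : π (posB x) = π (posB y) := Fin.ext (by omega)
    have e2 := congrArg Fin.val (π.injective e)
    have e3 : p+1+(x:ℕ) = p+1+(y:ℕ) := by simpa [posB] using e2
    exact Fin.ext (by omega)
  refine ⟨Equiv.ofBijective σ0 (Finite.injective_iff_bijective.mp hσinj),
          Equiv.ofBijective τ0 (Finite.injective_iff_bijective.mp hτinj), ?_, hM, ?_⟩
  · intro i h
    have hbd := hAbd i h
    have e0 : ((Equiv.ofBijective σ0 (Finite.injective_iff_bijective.mp hσinj))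
        ⟨(i:ℕ), h⟩ : ℕ) = (π i : ℕ) - a := rfl
    rw [e0]
    omega
  · intro i h
    have hbd := hBbd i h
    have hiq : (i:ℕ) - (p+1) < q := by have := i.isLt; omega
    have e0 : ((Equiv.ofBijective τ0 (Finite.injective_iff_bijective.mp hτinj))
        ⟨(i:ℕ) - (p+1), hiq⟩ : ℕ) = (π (posB ⟨(i:ℕ)-(p+1), hiq⟩) : ℕ) - b := rfl
    have e1 : posB ⟨(i:ℕ)-(p+1), hiq⟩ = i := Fin.ext (show p+1+((i:ℕ)-(p+1)) = (i:ℕ) by omega)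
    rw [e0, e1]
    omega
end Bounds

open Equiv Finset


def finShiftEquiv {n m c : ℕ} (P : Fin n → Prop) (Q : Fin m → Prop)
    (f : ∀ j : Fin n, P j → c ≤ (j:ℕ) ∧ (j:ℕ) - c < m)
    (g : ∀ j : Fin m, Q j → c + (j:ℕ) < n)
    (hPQ : ∀ (j : Fin n) (h : P j), Q ⟨(j:ℕ) - c, (f j h).2⟩)
    (hQP : ∀ (j : Fin m) (h : Q j), P ⟨c + (j:ℕ), g j h⟩) :
    {j : Fin n // P j} ≃ {j : Fin m // Q j} where
  toFun x := ⟨⟨(x.1:ℕ) - c, (f x.1 x.2).2⟩, hPQ x.1 x.2⟩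
  invFun y := ⟨⟨c + (y.1:ℕ), g y.1 y.2⟩, hQP y.1 y.2⟩
  left_inv x := Subtype.ext (Fin.ext (by have := (f x.1 x.2).1; simp; omega))
  right_inv y := Subtype.ext (Fin.ext (by simp))


lemma rho_at_min {p q : ℕ} (π : Equiv.Perm (Fin (p+1+q)))
    (h0 : (π ⟨p, by omega⟩ : ℕ) = 0) (k : Fin (p+1+q)) (hk : (k:ℕ) = p) :
    rhoLen π k = q := by
  rw [rhoLen_eq]
  have hπk : (π k : ℕ) = 0 := by
    have e : k = ⟨p, by omega⟩ := Fin.ext hk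
    rw [e]; exact h0
  have e1 : {j : Fin (p+1+q) // (k:ℕ) < (j:ℕ) ∧
      ∀ i : Fin (p+1+q), (k:ℕ) < (i:ℕ) → (i:ℕ) ≤ (j:ℕ) → (π k : ℕ) < (π i : ℕ)}
      ≃ {j : Fin q // True} := by
    refine finShiftEquiv (c := p+1) _ _
      (fun j hj => ⟨by have := hj.1; omega, by have := j.isLt; omega⟩)
      (fun j hj => by have := j.isLt; omega) (fun _ _ => trivial) ?_
    rintro j -
    refine ⟨show (k:ℕ) < p+1+(j:ℕ) by omega, ?_⟩
    intro i hki hij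
    have hki' : (k:ℕ) < (i:ℕ) := hki
    have hpos : 0 < (π i : ℕ) := pi_ne_zero π h0 i (by omega)
    show (π k : ℕ) < (π i : ℕ)
    omega
  rw [Nat.card_congr e1, Nat.card_congr (Equiv.subtypeUnivEquiv (fun _ => trivial))]
  simp

section Transfer
variable {p q a b : ℕ} (π : Equiv.Perm (Fin (p+1+q))) (σ : Equiv.Perm (Fin p))
  (τ : Equiv.Perm (Fin q)) (ha : 1 ≤ a) (hb : 1 ≤ b)
  (hA : ∀ i : Fin (p+1+q), (h : (i:ℕ) < p) → (π i : ℕ) = σ ⟨(i:ℕ), h⟩ + a)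
  (hM : ∀ i : Fin (p+1+q), (i:ℕ) = p → (π i : ℕ) = 0)
  (hB : ∀ i : Fin (p+1+q), (h : p < (i:ℕ)) →
    (π i : ℕ) = τ ⟨(i:ℕ) - (p+1), by have := i.isLt; omega⟩ + b)

include hA hM ha in
lemma rho_A (k : Fin (p+1+q)) (hk : (k:ℕ) < p) :
    rhoLen π k = rhoLen σ ⟨(k:ℕ), hk⟩ := by
  have hplt : p < p+1+q := by omega
  have hπk : (π k : ℕ) = (σ ⟨(k:ℕ), hk⟩ : ℕ) + a := hA k hk
  have hπp : (π ⟨p, hplt⟩ : ℕ) = 0 := hM ⟨p, hplt⟩ rfl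
  rw [rhoLen_eq, rhoLen_eq]
  have key : ∀ j : Fin (p+1+q), (k:ℕ) < (j:ℕ) →
      (∀ i : Fin (p+1+q), (k:ℕ) < (i:ℕ) → (i:ℕ) ≤ (j:ℕ) → (π k : ℕ) < (π i : ℕ)) →
      (j:ℕ) < p := by
    intro j h1 h2
    by_contra hge
    push_neg at hge
    have h3 := h2 ⟨p, hplt⟩ (show (k:ℕ) < p from hk) (show p ≤ (j:ℕ) from hge)
    rw [hπp, hπk] at h3
    omega
  apply Nat.card_congr
  refine finShiftEquiv (c := 0) _ _
    (fun j hj => ⟨Nat.zero_le _, by have := key j hj.1 hj.2; omega⟩)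
    (fun j hj => by have := j.isLt; omega) ?_ ?_
  · rintro j ⟨h1, h2⟩
    have hjp : (j:ℕ) < p := key j h1 h2
    refine ⟨show (k:ℕ) < (j:ℕ) - 0 by omega, ?_⟩
    intro i' hki hij
    have hki' : (k:ℕ) < (i':ℕ) := hki
    have hij' : (i':ℕ) ≤ (j:ℕ) - 0 := hij
    have hilt : (i':ℕ) < p+1+q := by have := i'.isLt; omega
    have hπi : (π ⟨(i':ℕ), hilt⟩ : ℕ) = (σ i' : ℕ) + a := hA ⟨(i':ℕ), hilt⟩ i'.isLt
    have h3 := h2 ⟨(i':ℕ), hilt⟩ (show (k:ℕ) < (i':ℕ) from hki')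
      (show (i':ℕ) ≤ (j:ℕ) by omega)
    rw [hπk, hπi] at h3
    show (σ ⟨(k:ℕ), hk⟩ : ℕ) < (σ i' : ℕ)
    omega
  · rintro j ⟨h1, h2⟩
    have h1' : (k:ℕ) < (j:ℕ) := h1
    refine ⟨show (k:ℕ) < 0 + (j:ℕ) by omega, ?_⟩
    intro i hki hij
    have hki' : (k:ℕ) < (i:ℕ) := hki
    have hij' : (i:ℕ) ≤ 0 + (j:ℕ) := hij
    have hilt : (i:ℕ) < p := by have := j.isLt; omega
    have hπi : (π i : ℕ) = (σ ⟨(i:ℕ), hilt⟩ : ℕ) + a := hA i hilt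
    have h3 := h2 ⟨(i:ℕ), hilt⟩ (show (k:ℕ) < (i:ℕ) from hki')
      (show (i:ℕ) ≤ (j:ℕ) by omega)
    show (π k : ℕ) < (π i : ℕ)
    rw [hπk, hπi]
    omega

include hB in
lemma rho_B (k : Fin (p+1+q)) (hk : p < (k:ℕ)) :
    rhoLen π k = rhoLen τ ⟨(k:ℕ) - (p+1), by have := k.isLt; omega⟩ := by
  have hkq : (k:ℕ) - (p+1) < q := by have := k.isLt; omega
  have hπk : (π k : ℕ) = (τ ⟨(k:ℕ) - (p+1), hkq⟩ : ℕ) + b := hB k hk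
  rw [rhoLen_eq, rhoLen_eq]
  apply Nat.card_congr
  refine finShiftEquiv (c := p+1) _ _
    (fun j hj => ⟨by have h1' : (k:ℕ) < (j:ℕ) := hj.1; omega,
                  by have := j.isLt; omega⟩)
    (fun j hj => by have := j.isLt; omega) ?_ ?_
  · rintro j ⟨h1, h2⟩
    have h1' : (k:ℕ) < (j:ℕ) := h1
    refine ⟨show (k:ℕ) - (p+1) < (j:ℕ) - (p+1) by omega, ?_⟩
    intro i' hki hij
    have hki' : (k:ℕ) - (p+1) < (i':ℕ) := hki
    have hij' : (i':ℕ) ≤ (j:ℕ) - (p+1) := hij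
    have hilt : p+1+(i':ℕ) < p+1+q := by have := i'.isLt; omega
    have hπi : (π ⟨p+1+(i':ℕ), hilt⟩ : ℕ) = (τ i' : ℕ) + b := by
      have h := hB ⟨p+1+(i':ℕ), hilt⟩ (show p < p+1+(i':ℕ) by omega)
      have e : (⟨((⟨p+1+(i':ℕ), hilt⟩ : Fin (p+1+q)):ℕ) - (p+1),
          by have := hilt; omega⟩ : Fin q) = i' := Fin.ext (by show p+1+(i':ℕ)-(p+1) = (i':ℕ); omega)
      rw [e] at h
      exact h
    have h3 := h2 ⟨p+1+(i':ℕ), hilt⟩ (show (k:ℕ) < p+1+(i':ℕ) by omega)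
      (show p+1+(i':ℕ) ≤ (j:ℕ) by omega)
    rw [hπk, hπi] at h3
    show (τ ⟨(k:ℕ)-(p+1), hkq⟩ : ℕ) < (τ i' : ℕ)
    omega
  · rintro j ⟨h1, h2⟩
    have h1' : (k:ℕ) - (p+1) < (j:ℕ) := h1
    refine ⟨show (k:ℕ) < p+1+(j:ℕ) by omega, ?_⟩
    intro i hki hij
    have hki' : (k:ℕ) < (i:ℕ) := hki
    have hij' : (i:ℕ) ≤ p+1+(j:ℕ) := hij
    have hpi : p < (i:ℕ) := by omega
    have hiq : (i:ℕ) - (p+1) < q := by have := i.isLt; omega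
    have hπi : (π i : ℕ) = (τ ⟨(i:ℕ)-(p+1), hiq⟩ : ℕ) + b := hB i hpi
    have h3 := h2 ⟨(i:ℕ)-(p+1), hiq⟩
      (show (k:ℕ)-(p+1) < (i:ℕ)-(p+1) by omega) (show (i:ℕ)-(p+1) ≤ (j:ℕ) by omega)
    show (π k : ℕ) < (π i : ℕ)
    rw [hπk, hπi]
    omega

include hA hM hB ha hb in
lemma isJacobi_glued_iff : IsJacobi π ↔ (IsJacobi σ ∧ IsJacobi τ ∧ Even q) := by
  constructor
  · intro hJ
    refine ⟨fun k' => ?_, fun k' => ?_, ?_⟩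
    · have hlt : ((k':ℕ)) < p+1+q := by have := k'.isLt; omega
      have h := rho_A π σ ha hA hM ⟨(k':ℕ), hlt⟩ k'.isLt
      have e : (⟨((⟨(k':ℕ), hlt⟩ : Fin (p+1+q)) : ℕ), k'.isLt⟩ : Fin p) = k' := Fin.ext rfl
      rw [e] at h
      exact h ▸ hJ _
    · have hlt : p+1+(k':ℕ) < p+1+q := by have := k'.isLt; omega
      have h := rho_B (a := a) π τ hB ⟨p+1+(k':ℕ), hlt⟩ (show p < p+1+(k':ℕ) by omega)
      have e : (⟨((⟨p+1+(k':ℕ), hlt⟩ : Fin (p+1+q)) : ℕ) - (p+1), by have := hlt; omega⟩ : Fin q)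
          = k' := Fin.ext (by show p+1+(k':ℕ)-(p+1) = (k':ℕ); omega)
      rw [e] at h
      exact h ▸ hJ _
    · have h := rho_at_min π (hM ⟨p, by omega⟩ rfl) ⟨p, by omega⟩ rfl
      exact h ▸ hJ _
  · rintro ⟨hσ, hτ, hq⟩ k
    rcases lt_trichotomy ((k:ℕ)) p with h | h | h
    · rw [rho_A π σ ha hA hM k h]
      exact hσ _
    · rw [rho_at_min π (hM ⟨p, by omega⟩ rfl) k h]
      exact hq
    · rw [rho_B (a := a) π τ hB k h]
      exact hτ _
end Transfer

open Equiv Finset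
section Avoid
variable {p q a b : ℕ} (π : Equiv.Perm (Fin (p+1+q))) (σ : Equiv.Perm (Fin p))
  (τ : Equiv.Perm (Fin q))
  (hA : ∀ i : Fin (p+1+q), (h : (i:ℕ) < p) → (π i : ℕ) = σ ⟨(i:ℕ), h⟩ + a)
  (hM : ∀ i : Fin (p+1+q), (i:ℕ) = p → (π i : ℕ) = 0)
  (hB : ∀ i : Fin (p+1+q), (h : p < (i:ℕ)) →
    (π i : ℕ) = τ ⟨(i:ℕ) - (p+1), by have := i.isLt; omega⟩ + b)

include hA in
lemma embedA (i' : Fin p) (h : (i':ℕ) < p+1+q) :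
    (π ⟨(i':ℕ), h⟩ : ℕ) = (σ i' : ℕ) + a := hA ⟨(i':ℕ), h⟩ i'.isLt

include hB in
lemma embedB (i' : Fin q) (h : p+1+(i':ℕ) < p+1+q) :
    (π ⟨p+1+(i':ℕ), h⟩ : ℕ) = (τ i' : ℕ) + b := by
  have h2 := hB ⟨p+1+(i':ℕ), h⟩ (show p < p+1+(i':ℕ) by omega)
  have e : (⟨((⟨p+1+(i':ℕ), h⟩ : Fin (p+1+q)) : ℕ) - (p+1), by have := h; omega⟩ : Fin q) = i' :=
    Fin.ext (show p+1+(i':ℕ)-(p+1) = (i':ℕ) by omega)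
  rw [e] at h2
  exact h2

include hA hM hB in
lemma avoids312_glued_iff (horder : ∀ x y : ℕ, x < p → y < q → x + a < y + b) :
    Avoids312 π ↔ (Avoids312 σ ∧ Avoids312 τ) := by
  constructor
  · intro hπ
    constructor
    · rintro ⟨i', j', k', h1, h2, h3, h4⟩
      apply hπ
      have hi : (i':ℕ) < p+1+q := by have := i'.isLt; omega
      have hj : (j':ℕ) < p+1+q := by have := j'.isLt; omega
      have hk : (k':ℕ) < p+1+q := by have := k'.isLt; omega
      have ei := embedA π σ hA i' hi
      have ej := embedA π σ hA j' hj
      have ek := embedA π σ hA k' hk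
      have h3' : (σ j' : ℕ) < (σ k' : ℕ) := h3
      have h4' : (σ k' : ℕ) < (σ i' : ℕ) := h4
      exact ⟨⟨(i':ℕ), hi⟩, ⟨(j':ℕ), hj⟩, ⟨(k':ℕ), hk⟩,
        show (i':ℕ) < (j':ℕ) from h1, show (j':ℕ) < (k':ℕ) from h2,
        show (π ⟨(j':ℕ), hj⟩ : ℕ) < (π ⟨(k':ℕ), hk⟩ : ℕ) by omega,
        show (π ⟨(k':ℕ), hk⟩ : ℕ) < (π ⟨(i':ℕ), hi⟩ : ℕ) by omega⟩
    · rintro ⟨i', j', k', h1, h2, h3, h4⟩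
      apply hπ
      have hi : p+1+(i':ℕ) < p+1+q := by have := i'.isLt; omega
      have hj : p+1+(j':ℕ) < p+1+q := by have := j'.isLt; omega
      have hk : p+1+(k':ℕ) < p+1+q := by have := k'.isLt; omega
      have ei := embedB π τ hB i' hi
      have ej := embedB π τ hB j' hj
      have ek := embedB π τ hB k' hk
      have h1' : (i':ℕ) < (j':ℕ) := h1
      have h2' : (j':ℕ) < (k':ℕ) := h2
      have h3' : (τ j' : ℕ) < (τ k' : ℕ) := h3
      have h4' : (τ k' : ℕ) < (τ i' : ℕ) := h4
      exact ⟨⟨p+1+(i':ℕ), hi⟩, ⟨p+1+(j':ℕ), hj⟩, ⟨p+1+(k':ℕ), hk⟩,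
        show p+1+(i':ℕ) < p+1+(j':ℕ) by omega, show p+1+(j':ℕ) < p+1+(k':ℕ) by omega,
        show (π ⟨p+1+(j':ℕ), hj⟩ : ℕ) < (π ⟨p+1+(k':ℕ), hk⟩ : ℕ) by omega,
        show (π ⟨p+1+(k':ℕ), hk⟩ : ℕ) < (π ⟨p+1+(i':ℕ), hi⟩ : ℕ) by omega⟩
  · rintro ⟨hσ, hτ⟩ ⟨i, j, k, hij, hjk, h1, h2⟩
    have hij' : (i:ℕ) < (j:ℕ) := hij
    have hjk' : (j:ℕ) < (k:ℕ) := hjk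
    have h1' : (π j : ℕ) < (π k : ℕ) := h1
    have h2' : (π k : ℕ) < (π i : ℕ) := h2
    have hkn := k.isLt
    rcases lt_trichotomy ((i:ℕ)) p with hi | hi | hi
    · rcases lt_trichotomy ((k:ℕ)) p with hkp | hkp | hkp
      · have hjp : (j:ℕ) < p := by omega
        have e1 := hA i hi
        have e2 := hA j hjp
        have e3 := hA k hkp
        exact hσ ⟨⟨(i:ℕ), hi⟩, ⟨(j:ℕ), hjp⟩, ⟨(k:ℕ), hkp⟩,
          show (i:ℕ) < (j:ℕ) from hij', show (j:ℕ) < (k:ℕ) from hjk',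
          show (σ ⟨(j:ℕ), hjp⟩ : ℕ) < (σ ⟨(k:ℕ), hkp⟩ : ℕ) by omega,
          show (σ ⟨(k:ℕ), hkp⟩ : ℕ) < (σ ⟨(i:ℕ), hi⟩ : ℕ) by omega⟩
      · have e := hM k hkp; omega
      · have e1 := hA i hi
        have hkq : (k:ℕ) - (p+1) < q := by omega
        have e2 : (π k : ℕ) = (τ ⟨(k:ℕ)-(p+1), hkq⟩ : ℕ) + b := hB k hkp
        have := horder (σ ⟨(i:ℕ), hi⟩) (τ ⟨(k:ℕ)-(p+1), hkq⟩) (σ _).isLt (τ _).isLt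
        omega
    · have e := hM i hi; omega
    · have hjp : p < (j:ℕ) := by omega
      have hkp : p < (k:ℕ) := by omega
      have hiq : (i:ℕ)-(p+1) < q := by have := i.isLt; omega
      have hjq : (j:ℕ)-(p+1) < q := by have := j.isLt; omega
      have hkq : (k:ℕ)-(p+1) < q := by omega
      have e1 : (π i : ℕ) = (τ ⟨(i:ℕ)-(p+1), hiq⟩ : ℕ) + b := hB i hi
      have e2 : (π j : ℕ) = (τ ⟨(j:ℕ)-(p+1), hjq⟩ : ℕ) + b := hB j hjp
      have e3 : (π k : ℕ) = (τ ⟨(k:ℕ)-(p+1), hkq⟩ : ℕ) + b := hB k hkp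
      exact hτ ⟨⟨(i:ℕ)-(p+1), hiq⟩, ⟨(j:ℕ)-(p+1), hjq⟩, ⟨(k:ℕ)-(p+1), hkq⟩,
        show (i:ℕ)-(p+1) < (j:ℕ)-(p+1) by omega,
        show (j:ℕ)-(p+1) < (k:ℕ)-(p+1) by omega,
        show (τ ⟨(j:ℕ)-(p+1), hjq⟩ : ℕ) < (τ ⟨(k:ℕ)-(p+1), hkq⟩ : ℕ) by omega,
        show (τ ⟨(k:ℕ)-(p+1), hkq⟩ : ℕ) < (τ ⟨(i:ℕ)-(p+1), hiq⟩ : ℕ) by omega⟩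

include hA hM hB in
lemma avoids213_glued_iff (horder : ∀ x y : ℕ, x < p → y < q → y + b < x + a) :
    Avoids213 π ↔ (Avoids213 σ ∧ Avoids213 τ) := by
  constructor
  · intro hπ
    constructor
    · rintro ⟨i', j', k', h1, h2, h3, h4⟩
      apply hπ
      have hi : (i':ℕ) < p+1+q := by have := i'.isLt; omega
      have hj : (j':ℕ) < p+1+q := by have := j'.isLt; omega
      have hk : (k':ℕ) < p+1+q := by have := k'.isLt; omega
      have ei := embedA π σ hA i' hi
      have ej := embedA π σ hA j' hj
      have ek := embedA π σ hA k' hk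
      have h3' : (σ j' : ℕ) < (σ i' : ℕ) := h3
      have h4' : (σ i' : ℕ) < (σ k' : ℕ) := h4
      exact ⟨⟨(i':ℕ), hi⟩, ⟨(j':ℕ), hj⟩, ⟨(k':ℕ), hk⟩,
        show (i':ℕ) < (j':ℕ) from h1, show (j':ℕ) < (k':ℕ) from h2,
        show (π ⟨(j':ℕ), hj⟩ : ℕ) < (π ⟨(i':ℕ), hi⟩ : ℕ) by omega,
        show (π ⟨(i':ℕ), hi⟩ : ℕ) < (π ⟨(k':ℕ), hk⟩ : ℕ) by omega⟩
    · rintro ⟨i', j', k', h1, h2, h3, h4⟩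
      apply hπ
      have hi : p+1+(i':ℕ) < p+1+q := by have := i'.isLt; omega
      have hj : p+1+(j':ℕ) < p+1+q := by have := j'.isLt; omega
      have hk : p+1+(k':ℕ) < p+1+q := by have := k'.isLt; omega
      have ei := embedB π τ hB i' hi
      have ej := embedB π τ hB j' hj
      have ek := embedB π τ hB k' hk
      have h1' : (i':ℕ) < (j':ℕ) := h1
      have h2' : (j':ℕ) < (k':ℕ) := h2
      have h3' : (τ j' : ℕ) < (τ i' : ℕ) := h3
      have h4' : (τ i' : ℕ) < (τ k' : ℕ) := h4
      exact ⟨⟨p+1+(i':ℕ), hi⟩, ⟨p+1+(j':ℕ), hj⟩, ⟨p+1+(k':ℕ), hk⟩,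
        show p+1+(i':ℕ) < p+1+(j':ℕ) by omega, show p+1+(j':ℕ) < p+1+(k':ℕ) by omega,
        show (π ⟨p+1+(j':ℕ), hj⟩ : ℕ) < (π ⟨p+1+(i':ℕ), hi⟩ : ℕ) by omega,
        show (π ⟨p+1+(i':ℕ), hi⟩ : ℕ) < (π ⟨p+1+(k':ℕ), hk⟩ : ℕ) by omega⟩
  · rintro ⟨hσ, hτ⟩ ⟨i, j, k, hij, hjk, h1, h2⟩
    have hij' : (i:ℕ) < (j:ℕ) := hij
    have hjk' : (j:ℕ) < (k:ℕ) := hjk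
    have h1' : (π j : ℕ) < (π i : ℕ) := h1
    have h2' : (π i : ℕ) < (π k : ℕ) := h2
    have hkn := k.isLt
    rcases lt_trichotomy ((k:ℕ)) p with hk | hk | hk
    · have hjp : (j:ℕ) < p := by omega
      have hip : (i:ℕ) < p := by omega
      have e1 := hA i hip
      have e2 := hA j hjp
      have e3 := hA k hk
      exact hσ ⟨⟨(i:ℕ), hip⟩, ⟨(j:ℕ), hjp⟩, ⟨(k:ℕ), hk⟩,
        show (i:ℕ) < (j:ℕ) from hij', show (j:ℕ) < (k:ℕ) from hjk',
        show (σ ⟨(j:ℕ), hjp⟩ : ℕ) < (σ ⟨(i:ℕ), hip⟩ : ℕ) by omega,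
        show (σ ⟨(i:ℕ), hip⟩ : ℕ) < (σ ⟨(k:ℕ), hk⟩ : ℕ) by omega⟩
    · have e := hM k hk; omega
    · rcases lt_trichotomy ((i:ℕ)) p with hip | hip | hip
      · have e1 := hA i hip
        have hkq : (k:ℕ) - (p+1) < q := by omega
        have e2 : (π k : ℕ) = (τ ⟨(k:ℕ)-(p+1), hkq⟩ : ℕ) + b := hB k hk
        have := horder (σ ⟨(i:ℕ), hip⟩) (τ ⟨(k:ℕ)-(p+1), hkq⟩) (σ _).isLt (τ _).isLt
        omega
      · have e := hM i hip; omega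
      · have hjp : p < (j:ℕ) := by omega
        have hiq : (i:ℕ)-(p+1) < q := by have := i.isLt; omega
        have hjq : (j:ℕ)-(p+1) < q := by have := j.isLt; omega
        have hkq : (k:ℕ)-(p+1) < q := by omega
        have e1 : (π i : ℕ) = (τ ⟨(i:ℕ)-(p+1), hiq⟩ : ℕ) + b := hB i hip
        have e2 : (π j : ℕ) = (τ ⟨(j:ℕ)-(p+1), hjq⟩ : ℕ) + b := hB j hjp
        have e3 : (π k : ℕ) = (τ ⟨(k:ℕ)-(p+1), hkq⟩ : ℕ) + b := hB k hk
        exact hτ ⟨⟨(i:ℕ)-(p+1), hiq⟩, ⟨(j:ℕ)-(p+1), hjq⟩, ⟨(k:ℕ)-(p+1), hkq⟩,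
          show (i:ℕ)-(p+1) < (j:ℕ)-(p+1) by omega,
          show (j:ℕ)-(p+1) < (k:ℕ)-(p+1) by omega,
          show (τ ⟨(j:ℕ)-(p+1), hjq⟩ : ℕ) < (τ ⟨(i:ℕ)-(p+1), hiq⟩ : ℕ) by omega,
          show (τ ⟨(i:ℕ)-(p+1), hiq⟩ : ℕ) < (τ ⟨(k:ℕ)-(p+1), hkq⟩ : ℕ) by omega⟩
end Avoid

open Equiv Finset

section Glue
variable {p q a b : ℕ}

def glueFun (haq : a ≤ q + 1) (hbp : b ≤ p + 1)
    (σ : Perm (Fin p)) (τ : Perm (Fin q)) : Fin (p+1+q) → Fin (p+1+q) := fun i =>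
  if h : (i : ℕ) < p then ⟨(σ ⟨i, h⟩ : ℕ) + a, by have := (σ ⟨i, h⟩).isLt; omega⟩
  else if h2 : (i : ℕ) = p then ⟨0, by omega⟩
  else ⟨(τ ⟨(i:ℕ) - (p+1), by have := i.isLt; omega⟩ : ℕ) + b, by
      have := (τ ⟨(i:ℕ) - (p+1), by have := i.isLt; omega⟩).isLt; omega⟩

variable (haq : a ≤ q + 1) (hbp : b ≤ p + 1) (σ : Perm (Fin p)) (τ : Perm (Fin q))

lemma glueFun_A (i : Fin (p+1+q)) (h : (i:ℕ) < p) :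
    (glueFun haq hbp σ τ i : ℕ) = σ ⟨i, h⟩ + a := by
  simp [glueFun, h]

lemma glueFun_mid (i : Fin (p+1+q)) (h : (i:ℕ) = p) :
    (glueFun haq hbp σ τ i : ℕ) = 0 := by
  rw [glueFun, dif_neg (by omega), dif_pos h]

lemma glueFun_B (i : Fin (p+1+q)) (h : p < (i:ℕ)) :
    (glueFun haq hbp σ τ i : ℕ)
      = τ ⟨(i:ℕ) - (p+1), by have := i.isLt; omega⟩ + b := by
  rw [glueFun, dif_neg (by omega), dif_neg (by omega)]

lemma glueFun_inj (ha : 1 ≤ a) (hb : 1 ≤ b)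
    (hdisj : ∀ x y : ℕ, x < p → y < q → x + a ≠ y + b) :
    Function.Injective (glueFun haq hbp σ τ) := by
  intro i j hij
  have hv : (glueFun haq hbp σ τ i : ℕ) = (glueFun haq hbp σ τ j : ℕ) := congrArg Fin.val hij
  have hi := i.isLt; have hj := j.isLt
  apply Fin.ext
  rcases lt_trichotomy ((i:ℕ)) p with h1 | h1 | h1 <;>
    rcases lt_trichotomy ((j:ℕ)) p with h2 | h2 | h2
  · rw [glueFun_A _ _ _ _ _ h1, glueFun_A _ _ _ _ _ h2] at hv
    have h3 : σ ⟨i, h1⟩ = σ ⟨j, h2⟩ := Fin.ext (by omega)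
    have h4 := congrArg Fin.val (σ.injective h3)
    simpa using h4
  · rw [glueFun_A _ _ _ _ _ h1, glueFun_mid _ _ _ _ _ h2] at hv; omega
  · rw [glueFun_A _ _ _ _ _ h1, glueFun_B _ _ _ _ _ h2] at hv
    exact absurd hv (hdisj _ _ (σ _).isLt (τ _).isLt)
  · rw [glueFun_mid _ _ _ _ _ h1, glueFun_A _ _ _ _ _ h2] at hv; omega
  · omega
  · rw [glueFun_mid _ _ _ _ _ h1, glueFun_B _ _ _ _ _ h2] at hv; omega
  · rw [glueFun_B _ _ _ _ _ h1, glueFun_A _ _ _ _ _ h2] at hv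
    exact absurd hv.symm (hdisj _ _ (σ _).isLt (τ _).isLt)
  · rw [glueFun_B _ _ _ _ _ h1, glueFun_mid _ _ _ _ _ h2] at hv; omega
  · rw [glueFun_B _ _ _ _ _ h1, glueFun_B _ _ _ _ _ h2] at hv
    have : τ ⟨(i:ℕ)-(p+1), by omega⟩ = τ ⟨(j:ℕ)-(p+1), by omega⟩ := Fin.ext (by omega)
    have := congrArg Fin.val (τ.injective this)
    simp only at this
    omega

noncomputable def glue (ha : 1 ≤ a) (hb : 1 ≤ b)
    (hdisj : ∀ x y : ℕ, x < p → y < q → x + a ≠ y + b) : Perm (Fin (p+1+q)) :=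
  Equiv.ofBijective (glueFun haq hbp σ τ)
    (Finite.injective_iff_bijective.mp (glueFun_inj haq hbp σ τ ha hb hdisj))

lemma glue_apply (ha : 1 ≤ a) (hb : 1 ≤ b) (hdisj) (i : Fin (p+1+q)) :
    glue haq hbp σ τ ha hb hdisj i = glueFun haq hbp σ τ i := rfl

end Glue


noncomputable def c312 (m : ℕ) : ℕ :=
  Nat.card {π : Equiv.Perm (Fin m) // IsJacobi π ∧ Avoids312 π}
noncomputable def c213 (m : ℕ) : ℕ :=
  Nat.card {π : Equiv.Perm (Fin m) // IsJacobi π ∧ Avoids213 π}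

lemma c_zero_aux (P : Equiv.Perm (Fin 0) → Prop) (hP : ∀ π, P π) :
    Nat.card {π : Equiv.Perm (Fin 0) // P π} = 1 := by
  rw [Nat.card_congr (Equiv.subtypeUnivEquiv hP), Nat.card_eq_fintype_card]
  simp

lemma c312_zero : c312 0 = 1 :=
  c_zero_aux _ (fun π => ⟨fun k => k.elim0, by rintro ⟨i, -⟩; exact i.elim0⟩)
lemma c213_zero : c213 0 = 1 :=
  c_zero_aux _ (fun π => ⟨fun k => k.elim0, by rintro ⟨i, -⟩; exact i.elim0⟩)

lemma fiber312 (p q : ℕ) :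
    Nat.card {π : Equiv.Perm (Fin (p+1+q)) //
        (IsJacobi π ∧ Avoids312 π) ∧ (π ⟨p, by omega⟩ : ℕ) = 0}
      = if Even q then c312 p * c312 q else 0 := by
  by_cases hq : Even q
  · rw [if_pos hq, c312, c312, ← Nat.card_prod]
    have haq : 1 ≤ q + 1 := by omega
    have hbp : p + 1 ≤ p + 1 := le_refl _
    have ha : (1:ℕ) ≤ 1 := le_refl 1
    have hb : 1 ≤ p + 1 := by omega
    have hdisj : ∀ x y : ℕ, x < p → y < q → x + 1 ≠ y + (p+1) := by intros; omega
    have horder : ∀ x y : ℕ, x < p → y < q → x + 1 < y + (p+1) := by intros; omega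
    have hmem : ∀ (σ : Equiv.Perm (Fin p)) (τ : Equiv.Perm (Fin q)),
        (IsJacobi σ ∧ Avoids312 σ) → (IsJacobi τ ∧ Avoids312 τ) →
        ((IsJacobi (glue haq hbp σ τ ha hb hdisj) ∧ Avoids312 (glue haq hbp σ τ ha hb hdisj)) ∧
          ((glue haq hbp σ τ ha hb hdisj) ⟨p, by omega⟩ : ℕ) = 0) := by
      intro σ τ hσ hτ
      have hGA : ∀ i : Fin (p+1+q), (h : (i:ℕ) < p) →
          ((glue haq hbp σ τ ha hb hdisj) i : ℕ) = σ ⟨(i:ℕ), h⟩ + 1 :=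
        fun i h => glueFun_A haq hbp _ _ i h
      have hGM : ∀ i : Fin (p+1+q), (i:ℕ) = p →
          ((glue haq hbp σ τ ha hb hdisj) i : ℕ) = 0 :=
        fun i h => glueFun_mid haq hbp _ _ i h
      have hGB : ∀ i : Fin (p+1+q), (h : p < (i:ℕ)) →
          ((glue haq hbp σ τ ha hb hdisj) i : ℕ)
            = τ ⟨(i:ℕ) - (p+1), by have := i.isLt; omega⟩ + (p+1) :=
        fun i h => glueFun_B haq hbp _ _ i h
      exact ⟨⟨(isJacobi_glued_iff _ _ _ ha hb hGA hGM hGB).mpr ⟨hσ.1, hτ.1, hq⟩,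
        (avoids312_glued_iff _ _ _ hGA hGM hGB horder).mpr ⟨hσ.2, hτ.2⟩⟩,
        hGM ⟨p, by omega⟩ rfl⟩
    refine Nat.card_congr (Equiv.ofBijective
      (fun st : {σ : Equiv.Perm (Fin p) // IsJacobi σ ∧ Avoids312 σ} ×
                {τ : Equiv.Perm (Fin q) // IsJacobi τ ∧ Avoids312 τ} =>
        ⟨glue haq hbp st.1.1 st.2.1 ha hb hdisj,
          (hmem st.1.1 st.2.1 st.1.2 st.2.2).1, (hmem st.1.1 st.2.1 st.1.2 st.2.2).2⟩)
      ⟨?_, ?_⟩).symm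
    · -- injective
      rintro ⟨⟨σ₁, hs1⟩, ⟨τ₁, ht1⟩⟩ ⟨⟨σ₂, hs2⟩, ⟨τ₂, ht2⟩⟩ heq
      have hG : glue haq hbp σ₁ τ₁ ha hb hdisj = glue haq hbp σ₂ τ₂ ha hb hdisj :=
        congrArg Subtype.val heq
      have hGA1 : ∀ i : Fin (p+1+q), (h : (i:ℕ) < p) →
          ((glue haq hbp σ₁ τ₁ ha hb hdisj) i : ℕ) = σ₁ ⟨(i:ℕ), h⟩ + 1 :=
        fun i h => glueFun_A haq hbp _ _ i h
      have hGA2 : ∀ i : Fin (p+1+q), (h : (i:ℕ) < p) →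
          ((glue haq hbp σ₂ τ₂ ha hb hdisj) i : ℕ) = σ₂ ⟨(i:ℕ), h⟩ + 1 :=
        fun i h => glueFun_A haq hbp _ _ i h
      have hGB1 : ∀ i : Fin (p+1+q), (h : p < (i:ℕ)) →
          ((glue haq hbp σ₁ τ₁ ha hb hdisj) i : ℕ)
            = τ₁ ⟨(i:ℕ) - (p+1), by have := i.isLt; omega⟩ + (p+1) :=
        fun i h => glueFun_B haq hbp _ _ i h
      have hGB2 : ∀ i : Fin (p+1+q), (h : p < (i:ℕ)) →
          ((glue haq hbp σ₂ τ₂ ha hb hdisj) i : ℕ)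
            = τ₂ ⟨(i:ℕ) - (p+1), by have := i.isLt; omega⟩ + (p+1) :=
        fun i h => glueFun_B haq hbp _ _ i h
      have e1 : σ₁ = σ₂ := by
        apply Equiv.ext
        intro i'
        apply Fin.ext
        have hlt : ((i':ℕ)) < p+1+q := by have := i'.isLt; omega
        have u1 := embedA (glue haq hbp σ₁ τ₁ ha hb hdisj) σ₁ hGA1 i' hlt
        have u2 := embedA (glue haq hbp σ₂ τ₂ ha hb hdisj) σ₂ hGA2 i' hlt
        have u3 : ((glue haq hbp σ₁ τ₁ ha hb hdisj) ⟨(i':ℕ), hlt⟩ : ℕ)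
            = ((glue haq hbp σ₂ τ₂ ha hb hdisj) ⟨(i':ℕ), hlt⟩ : ℕ) := by rw [hG]
        omega
      have e2 : τ₁ = τ₂ := by
        apply Equiv.ext
        intro j'
        apply Fin.ext
        have hlt : p+1+(j':ℕ) < p+1+q := by have := j'.isLt; omega
        have u1 := embedB (glue haq hbp σ₁ τ₁ ha hb hdisj) τ₁ hGB1 j' hlt
        have u2 := embedB (glue haq hbp σ₂ τ₂ ha hb hdisj) τ₂ hGB2 j' hlt
        have u3 : ((glue haq hbp σ₁ τ₁ ha hb hdisj) ⟨p+1+(j':ℕ), hlt⟩ : ℕ)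
            = ((glue haq hbp σ₂ τ₂ ha hb hdisj) ⟨p+1+(j':ℕ), hlt⟩ : ℕ) := by rw [hG]
        omega
      subst e1; subst e2
      rfl
    · -- surjective
      rintro ⟨π, ⟨hJ, hAv⟩, h0⟩
      obtain ⟨bd1, bd2⟩ := bounds312 π h0 hAv
      obtain ⟨σ, τ, hA, hM, hB⟩ := reconstruct π h0 bd1 bd2
      obtain ⟨hσJ, hτJ, -⟩ := (isJacobi_glued_iff π σ τ ha hb hA hM hB).mp hJ
      obtain ⟨hσA, hτA⟩ := (avoids312_glued_iff π σ τ hA hM hB horder).mp hAv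
      refine ⟨⟨⟨σ, hσJ, hσA⟩, ⟨τ, hτJ, hτA⟩⟩, ?_⟩
      apply Subtype.ext
      show glue haq hbp σ τ ha hb hdisj = π
      apply Equiv.ext
      intro i
      apply Fin.ext
      rcases lt_trichotomy ((i:ℕ)) p with h | h | h
      · rw [glue_apply haq hbp σ τ ha hb hdisj i, glueFun_A haq hbp σ τ i h, hA i h]
      · rw [glue_apply haq hbp σ τ ha hb hdisj i, glueFun_mid haq hbp σ τ i h, hM i h]
      · rw [glue_apply haq hbp σ τ ha hb hdisj i, glueFun_B haq hbp σ τ i h, hB i h]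
  · rw [if_neg hq]
    have hE : IsEmpty {π : Equiv.Perm (Fin (p+1+q)) //
        (IsJacobi π ∧ Avoids312 π) ∧ (π ⟨p, by omega⟩ : ℕ) = 0} := by
      constructor
      rintro ⟨π, ⟨hJ, -⟩, h0⟩
      have h1 := hJ ⟨p, by omega⟩
      rw [rho_at_min π h0 ⟨p, by omega⟩ rfl] at h1
      exact hq h1
    exact Nat.card_of_isEmpty

lemma fiber213 (p q : ℕ) :
    Nat.card {π : Equiv.Perm (Fin (p+1+q)) //
        (IsJacobi π ∧ Avoids213 π) ∧ (π ⟨p, by omega⟩ : ℕ) = 0}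
      = if Even q then c213 p * c213 q else 0 := by
  by_cases hq : Even q
  · rw [if_pos hq, c213, c213, ← Nat.card_prod]
    have haq : q+1 ≤ q + 1 := le_refl _
    have hbp : 1 ≤ p + 1 := by omega
    have ha : (1:ℕ) ≤ q+1 := by omega
    have hb : (1:ℕ) ≤ 1 := le_refl 1
    have hdisj : ∀ x y : ℕ, x < p → y < q → x + (q+1) ≠ y + 1 := by intros; omega
    have horder : ∀ x y : ℕ, x < p → y < q → y + 1 < x + (q+1) := by intros; omega
    have hmem : ∀ (σ : Equiv.Perm (Fin p)) (τ : Equiv.Perm (Fin q)),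
        (IsJacobi σ ∧ Avoids213 σ) → (IsJacobi τ ∧ Avoids213 τ) →
        ((IsJacobi (glue haq hbp σ τ ha hb hdisj) ∧ Avoids213 (glue haq hbp σ τ ha hb hdisj)) ∧
          ((glue haq hbp σ τ ha hb hdisj) ⟨p, by omega⟩ : ℕ) = 0) := by
      intro σ τ hσ hτ
      have hGA : ∀ i : Fin (p+1+q), (h : (i:ℕ) < p) →
          ((glue haq hbp σ τ ha hb hdisj) i : ℕ) = σ ⟨(i:ℕ), h⟩ + (q+1) :=
        fun i h => glueFun_A haq hbp _ _ i h
      have hGM : ∀ i : Fin (p+1+q), (i:ℕ) = p →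
          ((glue haq hbp σ τ ha hb hdisj) i : ℕ) = 0 :=
        fun i h => glueFun_mid haq hbp _ _ i h
      have hGB : ∀ i : Fin (p+1+q), (h : p < (i:ℕ)) →
          ((glue haq hbp σ τ ha hb hdisj) i : ℕ)
            = τ ⟨(i:ℕ) - (p+1), by have := i.isLt; omega⟩ + 1 :=
        fun i h => glueFun_B haq hbp _ _ i h
      exact ⟨⟨(isJacobi_glued_iff _ _ _ ha hb hGA hGM hGB).mpr ⟨hσ.1, hτ.1, hq⟩,
        (avoids213_glued_iff _ _ _ hGA hGM hGB horder).mpr ⟨hσ.2, hτ.2⟩⟩,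
        hGM ⟨p, by omega⟩ rfl⟩
    refine Nat.card_congr (Equiv.ofBijective
      (fun st : {σ : Equiv.Perm (Fin p) // IsJacobi σ ∧ Avoids213 σ} ×
                {τ : Equiv.Perm (Fin q) // IsJacobi τ ∧ Avoids213 τ} =>
        ⟨glue haq hbp st.1.1 st.2.1 ha hb hdisj,
          (hmem st.1.1 st.2.1 st.1.2 st.2.2).1, (hmem st.1.1 st.2.1 st.1.2 st.2.2).2⟩)
      ⟨?_, ?_⟩).symm
    · rintro ⟨⟨σ₁, hs1⟩, ⟨τ₁, ht1⟩⟩ ⟨⟨σ₂, hs2⟩, ⟨τ₂, ht2⟩⟩ heq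
      have hG : glue haq hbp σ₁ τ₁ ha hb hdisj = glue haq hbp σ₂ τ₂ ha hb hdisj :=
        congrArg Subtype.val heq
      have hGA1 : ∀ i : Fin (p+1+q), (h : (i:ℕ) < p) →
          ((glue haq hbp σ₁ τ₁ ha hb hdisj) i : ℕ) = σ₁ ⟨(i:ℕ), h⟩ + (q+1) :=
        fun i h => glueFun_A haq hbp _ _ i h
      have hGA2 : ∀ i : Fin (p+1+q), (h : (i:ℕ) < p) →
          ((glue haq hbp σ₂ τ₂ ha hb hdisj) i : ℕ) = σ₂ ⟨(i:ℕ), h⟩ + (q+1) :=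
        fun i h => glueFun_A haq hbp _ _ i h
      have hGB1 : ∀ i : Fin (p+1+q), (h : p < (i:ℕ)) →
          ((glue haq hbp σ₁ τ₁ ha hb hdisj) i : ℕ)
            = τ₁ ⟨(i:ℕ) - (p+1), by have := i.isLt; omega⟩ + 1 :=
        fun i h => glueFun_B haq hbp _ _ i h
      have hGB2 : ∀ i : Fin (p+1+q), (h : p < (i:ℕ)) →
          ((glue haq hbp σ₂ τ₂ ha hb hdisj) i : ℕ)
            = τ₂ ⟨(i:ℕ) - (p+1), by have := i.isLt; omega⟩ + 1 :=
        fun i h => glueFun_B haq hbp _ _ i h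
      have e1 : σ₁ = σ₂ := by
        apply Equiv.ext
        intro i'
        apply Fin.ext
        have hlt : ((i':ℕ)) < p+1+q := by have := i'.isLt; omega
        have u1 := embedA (glue haq hbp σ₁ τ₁ ha hb hdisj) σ₁ hGA1 i' hlt
        have u2 := embedA (glue haq hbp σ₂ τ₂ ha hb hdisj) σ₂ hGA2 i' hlt
        have u3 : ((glue haq hbp σ₁ τ₁ ha hb hdisj) ⟨(i':ℕ), hlt⟩ : ℕ)
            = ((glue haq hbp σ₂ τ₂ ha hb hdisj) ⟨(i':ℕ), hlt⟩ : ℕ) := by rw [hG]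
        omega
      have e2 : τ₁ = τ₂ := by
        apply Equiv.ext
        intro j'
        apply Fin.ext
        have hlt : p+1+(j':ℕ) < p+1+q := by have := j'.isLt; omega
        have u1 := embedB (glue haq hbp σ₁ τ₁ ha hb hdisj) τ₁ hGB1 j' hlt
        have u2 := embedB (glue haq hbp σ₂ τ₂ ha hb hdisj) τ₂ hGB2 j' hlt
        have u3 : ((glue haq hbp σ₁ τ₁ ha hb hdisj) ⟨p+1+(j':ℕ), hlt⟩ : ℕ)
            = ((glue haq hbp σ₂ τ₂ ha hb hdisj) ⟨p+1+(j':ℕ), hlt⟩ : ℕ) := by rw [hG]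
        omega
      subst e1; subst e2
      rfl
    · rintro ⟨π, ⟨hJ, hAv⟩, h0⟩
      obtain ⟨bd1, bd2⟩ := bounds213 π h0 hAv
      obtain ⟨σ, τ, hA, hM, hB⟩ := reconstruct π h0 bd1 bd2
      obtain ⟨hσJ, hτJ, -⟩ := (isJacobi_glued_iff π σ τ ha hb hA hM hB).mp hJ
      obtain ⟨hσA, hτA⟩ := (avoids213_glued_iff π σ τ hA hM hB horder).mp hAv
      refine ⟨⟨⟨σ, hσJ, hσA⟩, ⟨τ, hτJ, hτA⟩⟩, ?_⟩
      apply Subtype.ext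
      show glue haq hbp σ τ ha hb hdisj = π
      apply Equiv.ext
      intro i
      apply Fin.ext
      rcases lt_trichotomy ((i:ℕ)) p with h | h | h
      · rw [glue_apply haq hbp σ τ ha hb hdisj i, glueFun_A haq hbp σ τ i h, hA i h]
      · rw [glue_apply haq hbp σ τ ha hb hdisj i, glueFun_mid haq hbp σ τ i h, hM i h]
      · rw [glue_apply haq hbp σ τ ha hb hdisj i, glueFun_B haq hbp σ τ i h, hB i h]
  · rw [if_neg hq]
    have hE : IsEmpty {π : Equiv.Perm (Fin (p+1+q)) //
        (IsJacobi π ∧ Avoids213 π) ∧ (π ⟨p, by omega⟩ : ℕ) = 0} := by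
      constructor
      rintro ⟨π, ⟨hJ, -⟩, h0⟩
      have h1 := hJ ⟨p, by omega⟩
      rw [rho_at_min π h0 ⟨p, by omega⟩ rfl] at h1
      exact hq h1
    exact Nat.card_of_isEmpty

lemma fiberT312 (n pp qq : ℕ) (h : n = pp+1+qq) (hlt : pp < n) :
    Nat.card {π : Equiv.Perm (Fin n) // (IsJacobi π ∧ Avoids312 π) ∧ (π ⟨pp, hlt⟩ : ℕ) = 0}
      = if Even qq then c312 pp * c312 qq else 0 := by
  subst h
  exact fiber312 pp qq

lemma fiberT213 (n pp qq : ℕ) (h : n = pp+1+qq) (hlt : pp < n) :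
    Nat.card {π : Equiv.Perm (Fin n) // (IsJacobi π ∧ Avoids213 π) ∧ (π ⟨pp, hlt⟩ : ℕ) = 0}
      = if Even qq then c213 pp * c213 qq else 0 := by
  subst h
  exact fiber213 pp qq

lemma partition_card {n : ℕ} (P : Equiv.Perm (Fin (n+1)) → Prop) :
    Nat.card {π : Equiv.Perm (Fin (n+1)) // P π}
      = ∑ v : Fin (n+1), Nat.card {π : Equiv.Perm (Fin (n+1)) // P π ∧ (π v : ℕ) = 0} := by
  classical
  have e1 : {π : Equiv.Perm (Fin (n+1)) // P π}
      ≃ Σ v : Fin (n+1), {x : {π : Equiv.Perm (Fin (n+1)) // P π} // x.1.symm 0 = v} :=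
    (Equiv.sigmaFiberEquiv (fun x : {π : Equiv.Perm (Fin (n+1)) // P π} => x.1.symm 0)).symm
  rw [Nat.card_congr e1, Nat.card_eq_fintype_card, Fintype.card_sigma]
  apply Finset.sum_congr rfl
  intro v _
  rw [← Nat.card_eq_fintype_card]
  apply Nat.card_congr
  refine (Equiv.subtypeSubtypeEquivSubtypeInter P
    (fun π => π.symm 0 = v)).trans (Equiv.subtypeEquivRight ?_)
  intro π
  constructor
  · rintro ⟨hP, hv⟩
    refine ⟨hP, ?_⟩
    rw [← hv]
    simp
  · rintro ⟨hP, hv⟩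
    refine ⟨hP, ?_⟩
    have h2 : π v = 0 := Fin.ext (by simpa using hv)
    rw [← h2]
    simp

lemma c312_rec (N : ℕ) :
    c312 (N+1) = ∑ i ∈ Finset.range (N+1), (if Even (N-i) then c312 i * c312 (N-i) else 0) := by
  rw [show c312 (N+1)
      = Nat.card {π : Equiv.Perm (Fin (N+1)) // IsJacobi π ∧ Avoids312 π} from rfl,
    partition_card]
  rw [← Fin.sum_univ_eq_sum_range (fun i => if Even (N-i) then c312 i * c312 (N-i) else 0) (N+1)]
  apply Finset.sum_congr rfl
  intro v _
  exact fiberT312 (N+1) v.val (N - v.val) (by omega) v.isLt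

lemma c213_rec (N : ℕ) :
    c213 (N+1) = ∑ i ∈ Finset.range (N+1), (if Even (N-i) then c213 i * c213 (N-i) else 0) := by
  rw [show c213 (N+1)
      = Nat.card {π : Equiv.Perm (Fin (N+1)) // IsJacobi π ∧ Avoids213 π} from rfl,
    partition_card]
  rw [← Fin.sum_univ_eq_sum_range (fun i => if Even (N-i) then c213 i * c213 (N-i) else 0) (N+1)]
  apply Finset.sum_congr rfl
  intro v _
  exact fiberT213 (N+1) v.val (N - v.val) (by omega) v.isLt

lemma sum_if_even (N : ℕ) (f : ℕ → ℕ → ℕ) :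
    ∑ i ∈ Finset.range (N+1), (if Even (N-i) then f i (N-i) else 0)
      = ∑ j ∈ Finset.range (N/2+1), f (N-2*j) (2*j) := by
  rw [← Finset.sum_filter]
  refine Finset.sum_bij' (fun i _ => (N-i)/2) (fun j _ => N - 2*j) ?_ ?_ ?_ ?_ ?_
  · intro a ha
    simp only [Finset.mem_filter, Finset.mem_range, Nat.even_iff] at ha ⊢
    omega
  · intro a ha
    simp only [Finset.mem_filter, Finset.mem_range, Nat.even_iff] at ha ⊢
    omega
  · intro a ha
    simp only [Finset.mem_filter, Finset.mem_range, Nat.even_iff] at ha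
    show N - 2*((N-a)/2) = a
    omega
  · intro a ha
    simp only [Finset.mem_range] at ha
    show (N - (N - 2*a))/2 = a
    omega
  · intro a ha
    simp only [Finset.mem_filter, Finset.mem_range, Nat.even_iff] at ha
    have e1 : N - 2*((N-a)/2) = a := by omega
    have e2 : 2*((N-a)/2) = N - a := by omega
    rw [e1, e2]

lemma count_formula (c : ℕ → ℕ) (hz : c 0 = 1)
    (hrec : ∀ N, c (N+1) = ∑ i ∈ Finset.range (N+1),
      (if Even (N-i) then c i * c (N-i) else 0)) :
    ∀ N, (c N : ℚ) = if Even N then fcA (N/2) 1 else fcA (N/2) 2 := by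
  intro N
  induction N using Nat.strong_induction_on with
  | _ N ih =>
    rcases N with _ | M
    · simp [hz, fcA_zero_left]
    · rw [hrec M, sum_if_even M (fun x y => c x * c y)]
      rcases Nat.even_or_odd M with hM | hM
      · obtain ⟨m, rfl⟩ : ∃ m, M = 2*m := by
          rw [Nat.even_iff] at hM; exact ⟨M/2, by omega⟩
        rw [if_neg (by rw [Nat.even_iff]; omega),
          show (2*m+1)/2 = m from by omega, show (2*m)/2 = m from by omega]
        push_cast
        have hterm : ∀ j ∈ Finset.range (m+1),
            ((c (2*m-2*j) : ℚ)) * ((c (2*j)) : ℚ) = fcA (m-j) 1 * fcA j 1 := by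
          intro j hj
          rw [Finset.mem_range] at hj
          have e1 := ih (2*m-2*j) (by omega)
          have e2 := ih (2*j) (by omega)
          rw [if_pos (by rw [Nat.even_iff]; omega), show (2*m-2*j)/2 = m - j from by omega] at e1
          rw [if_pos (by rw [Nat.even_iff]; omega), show (2*j)/2 = j from by omega] at e2
          rw [e1, e2]
        rw [Finset.sum_congr rfl hterm,
          ← Finset.sum_range_reflect (fun j => fcA (m-j) 1 * fcA j 1) (m+1)]
        have hswap : ∑ j ∈ Finset.range (m+1), fcA (m-(m+1-1-j)) 1 * fcA ((m+1-1-j)) 1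
            = ∑ j ∈ Finset.range (m+1), fcA j 1 * fcA (m-j) 1 :=
          Finset.sum_congr rfl (fun j hj => by
            rw [Finset.mem_range] at hj
            rw [show m-(m+1-1-j) = j from by omega, show m+1-1-j = m-j from by omega])
        rw [hswap]
        exact fcA_conv m 1 1
      · obtain ⟨m, rfl⟩ : ∃ m, M = 2*m+1 := by
          rw [Nat.odd_iff] at hM; exact ⟨M/2, by omega⟩
        rw [if_pos (by rw [Nat.even_iff]; omega),
          show (2*m+1+1)/2 = m+1 from by omega, show (2*m+1)/2 = m from by omega]
        push_cast
        have hterm : ∀ j ∈ Finset.range (m+1),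
            ((c (2*m+1-2*j) : ℚ)) * ((c (2*j)) : ℚ) = fcA (m-j) 2 * fcA j 1 := by
          intro j hj
          rw [Finset.mem_range] at hj
          have e1 := ih (2*m+1-2*j) (by omega)
          have e2 := ih (2*j) (by omega)
          rw [if_neg (by rw [Nat.even_iff]; omega), show (2*m+1-2*j)/2 = m - j from by omega] at e1
          rw [if_pos (by rw [Nat.even_iff]; omega), show (2*j)/2 = j from by omega] at e2
          rw [e1, e2]
        rw [Finset.sum_congr rfl hterm,
          ← Finset.sum_range_reflect (fun j => fcA (m-j) 2 * fcA j 1) (m+1)]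
        have hswap : ∑ j ∈ Finset.range (m+1), fcA (m-(m+1-1-j)) 2 * fcA ((m+1-1-j)) 1
            = ∑ j ∈ Finset.range (m+1), fcA j 2 * fcA (m-j) 1 :=
          Finset.sum_congr rfl (fun j hj => by
            rw [Finset.mem_range] at hj
            rw [show m-(m+1-1-j) = j from by omega, show m+1-1-j = m-j from by omega])
        rw [hswap]
        have hp := fcA_pascal m 0
        rw [fcA_zero_right, if_neg (Nat.succ_ne_zero m), zero_add] at hp
        rw [fcA_conv m 2 1, show (2:ℕ)+1 = 0+3 from rfl, hp]
        ring

/-- Enumeration of 213- and 312-avoiding Jacobi permutations of `[2n]` and `[2n+1]`. -/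
theorem jacobi_avoid_213_312_count (n : ℕ) :
    (Nat.card {π : Equiv.Perm (Fin (2 * n)) // IsJacobi π ∧ Avoids213 π} : ℚ)
        = (1 / (2 * (n : ℚ) + 1)) * ((3 * n).choose n : ℕ) ∧
    (Nat.card {π : Equiv.Perm (Fin (2 * n)) // IsJacobi π ∧ Avoids312 π} : ℚ)
        = (1 / (2 * (n : ℚ) + 1)) * ((3 * n).choose n : ℕ) ∧
    (Nat.card {π : Equiv.Perm (Fin (2 * n + 1)) // IsJacobi π ∧ Avoids213 π} : ℚ)
        = (1 / (2 * (n : ℚ) + 1)) * ((3 * n + 1).choose (n + 1) : ℕ) ∧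
    (Nat.card {π : Equiv.Perm (Fin (2 * n + 1)) // IsJacobi π ∧ Avoids312 π} : ℚ)
        = (1 / (2 * (n : ℚ) + 1)) * ((3 * n + 1).choose (n + 1) : ℕ) := by
  have h213 := count_formula c213 c213_zero c213_rec
  have h312 := count_formula c312 c312_zero c312_rec
  have heven : ∀ n : ℕ, Even (2*n) := fun n => ⟨n, by ring⟩
  have hodd : ∀ n : ℕ, ¬ Even (2*n+1) := fun n => by rw [Nat.even_iff]; omega
  refine ⟨?_, ?_, ?_, ?_⟩
  · have h := h213 (2*n)
    rw [if_pos (heven n), show (2*n)/2 = n from by omega, fcA_one] at h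
    exact h
  · have h := h312 (2*n)
    rw [if_pos (heven n), show (2*n)/2 = n from by omega, fcA_one] at h
    exact h
  · have h := h213 (2*n+1)
    rw [if_neg (hodd n), show (2*n+1)/2 = n from by omega, fcA_two] at h
    exact h
  · have h := h312 (2*n+1)
    rw [if_neg (hodd n), show (2*n+1)/2 = n from by omega, fcA_two] at h
    exact h
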